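/- Let H be a complex Hilbert space and Q ∈ B(H) an idempotent. Then |Q*| = Q(2m(Q) − 1), and |Q*|^† = |Q*|·(Q + Q* − 1)^{−2}. -/

import Mathlib

/- For an idempotent `Q` on a complex Hilbert space `H`, we define (in `B(H)`):
the orthogonal projection onto the closure of the range of an operator,
the range projection `P_{ran Q} = Q (Q + Q* - 1)⁻¹`,
`|Q*| = (Q Q*)^{1/2}`, its Moore-Penrose inverse
`|Q*|^† = (P_{ran Q} P_{ran Q*} P_{ran Q})^{1/2}`,
the matched projection `m(Q) = (1/2)(|Q*| + Q*) |Q*|^† (|Q*| + 1)⁻¹ (|Q*| + Q)`,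
and the supplementary projection `s(Q) = m(2 P_{ran Q} - Q)`. -/

noncomputable section

namespace QPP

variable {H : Type*} [NormedAddCommGroup H] [InnerProductSpace ℂ H] [CompleteSpace H]

/-- The orthogonal projection onto the closure of the range of `T`, as an element of `B(H)`. -/
def closRangeProj (T : H →L[ℂ] H) : H →L[ℂ] H :=
  letI K := (LinearMap.range (T : H →ₗ[ℂ] H)).topologicalClosure
  haveI : CompleteSpace K :=
    (LinearMap.range (T : H →ₗ[ℂ] H)).isClosed_topologicalClosure.completeSpace_coe
  K.subtypeL ∘L K.orthogonalProjectionOnto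

/-- The range projection `P_{ran Q} = Q (Q + Q* - 1)⁻¹` of an idempotent `Q`.  (For an
idempotent `Q` the operator `Q + Q* - 1` is invertible, so `Ring.inverse` is its inverse.) -/
def rangeProj (Q : H →L[ℂ] H) : H →L[ℂ] H :=
  Q * Ring.inverse (Q + star Q - 1)

/-- `|Q*| = (Q Q*)^{1/2}`. -/
def absStar (Q : H →L[ℂ] H) : H →L[ℂ] H :=
  CFC.sqrt (Q * star Q)

/-- `|Q*|^† = (P_{ran Q} P_{ran Q*} P_{ran Q})^{1/2}`, the Moore-Penrose inverse of `|Q*|`. -/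
def absStarPinv (Q : H →L[ℂ] H) : H →L[ℂ] H :=
  CFC.sqrt (rangeProj Q * rangeProj (star Q) * rangeProj Q)

/-- The matched projection `m(Q) = (1/2)(|Q*| + Q*) |Q*|^† (|Q*| + 1)⁻¹ (|Q*| + Q)`. -/
def matchedProj (Q : H →L[ℂ] H) : H →L[ℂ] H :=
  (2 : ℂ)⁻¹ • ((absStar Q + star Q) * absStarPinv Q * Ring.inverse (absStar Q + 1)
      * (absStar Q + Q))

/-- The supplementary projection `s(Q) = m(2 P_{ran Q} - Q)`. -/
def suppProj (Q : H →L[ℂ] H) : H →L[ℂ] H :=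
  matchedProj (2 * rangeProj Q - Q)

end QPP

variable {H : Type*} [NormedAddCommGroup H] [InnerProductSpace ℂ H] [CompleteSpace H]

set_option maxHeartbeats 2000000 in
set_option synthInstance.maxHeartbeats 1000000 in
/-- For every idempotent `Q`, `|Q*| = Q (2 m(Q) - 1)` and
`|Q*|^† = |Q*| (Q + Q* - 1)⁻²`. -/
theorem absStar_and_pinv_formulas (Q : H →L[ℂ] H) (hQ : IsIdempotentElem Q) :
    QPP.absStar Q = Q * (2 * QPP.matchedProj Q - 1) ∧
    QPP.absStarPinv Q = QPP.absStar Q * (Ring.inverse (Q + star Q - 1)) ^ 2 := by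
  have hQQ : Q * Q = Q := hQ
  have hSS : star Q * star Q = star Q := by rw [← star_mul, hQQ]
  set D : H →L[ℂ] H := Q + star Q - 1 with hDdef
  have hDsa : star D = D := by
    simp [hDdef, star_sub, star_add, add_comm]
  have hDDe : D * D = Q * star Q + star Q * Q - Q - star Q + 1 := by
    simp only [hDdef, sub_mul, mul_sub, add_mul, mul_add, one_mul, mul_one, hQQ, hSS]
    abel
  have hDDu : IsUnit (D * D) := by
    refine CStarAlgebra.isUnit_of_le 1 ?_
    have h : D * D = 1 + star (Q - star Q) * (Q - star Q) := by
      rw [hDDe]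
      simp only [star_sub, star_star, sub_mul, mul_sub, hQQ, hSS]
      abel
    rw [h]
    exact le_add_of_nonneg_right (star_mul_self_nonneg _)
  have hDu : IsUnit D := by
    obtain ⟨v, hv1, hv2⟩ := isUnit_iff_exists.mp hDDu
    have h1 : D * (D * v) = 1 := by rw [← mul_assoc]; exact hv1
    have h2 : (v * D) * D = 1 := by rw [mul_assoc]; exact hv2
    have h3 : v * D = D * v := by
      calc v * D = (v * D) * (D * (D * v)) := by rw [h1, mul_one]
        _ = ((v * D) * D) * (D * v) := by noncomm_ring
        _ = D * v := by rw [h2, one_mul]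
    exact isUnit_iff_exists.mpr ⟨D * v, h1, by rw [← h3]; exact h2⟩
  set d : H →L[ℂ] H := Ring.inverse D with hddef
  have hd1 : d * D = 1 := Ring.inverse_mul_cancel D hDu
  have hd2 : D * d = 1 := Ring.mul_inverse_cancel D hDu
  have hdsa : star d = d := by
    have h1 : star d * D = 1 := by
      have := congrArg star hd2
      rwa [star_mul, hDsa, star_one] at this
    calc star d = star d * (D * d) := by rw [hd2, mul_one]
      _ = (star d * D) * d := by rw [mul_assoc]
      _ = d := by rw [h1, one_mul]
  have hQD : Q * D = Q * star Q := by
    simp only [hDdef, mul_sub, mul_add, mul_one, hQQ]; abel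
  have hDQ : D * Q = star Q * Q := by
    simp only [hDdef, sub_mul, add_mul, one_mul, hQQ]; abel
  have hDS : D * star Q = Q * star Q := by
    simp only [hDdef, sub_mul, add_mul, one_mul, hSS]; abel
  have hSD : star Q * D = star Q * Q := by
    simp only [hDdef, mul_sub, mul_add, mul_one, hSS]; abel
  set T : H →L[ℂ] H := CFC.sqrt (Q * star Q) with hTdef
  have habs : QPP.absStar Q = T := by rw [hTdef]; rfl
  have hQSnn : (0 : H →L[ℂ] H) ≤ Q * star Q := mul_star_self_nonneg Q
  have hTnn : (0 : H →L[ℂ] H) ≤ T := CFC.sqrt_nonneg _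
  have hTsa : star T = T := (IsSelfAdjoint.of_nonneg hTnn).star_eq
  have hT2 : T * T = Q * star Q := by
    rw [hTdef, ← pow_two]; exact CFC.sq_sqrt (Q * star Q) hQSnn
  have hTS : T * star Q = T := by
    have h0 : star (T * (1 - star Q)) * (T * (1 - star Q)) = 0 := by
      rw [star_mul, star_sub, star_one, star_star, hTsa]
      calc (1 - Q) * T * (T * (1 - star Q)) = ((1 - Q) * (T * T)) * (1 - star Q) := by
            noncomm_ring
        _ = ((1 - Q) * (Q * star Q)) * (1 - star Q) := by rw [hT2]
        _ = 0 := by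
            rw [sub_mul, one_mul, ← mul_assoc, hQQ, sub_self, zero_mul]
    have h1 : T * (1 - star Q) = 0 := (CStarRing.star_mul_self_eq_zero_iff _).mp h0
    rw [mul_sub, mul_one] at h1
    exact (sub_eq_zero.mp h1).symm
  have hQT : Q * T = T := by
    have := congrArg star hTS
    rwa [star_mul, star_star, hTsa] at this
  have hTDD : T * (D * D) = T * T * T := by
    rw [hDDe]
    simp only [mul_add, mul_sub, mul_one]
    rw [← hT2, ← mul_assoc T (star Q) Q, hTS]
    noncomm_ring
  have hDDT : (D * D) * T = T * T * T := by
    have := congrArg star hTDD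
    simp only [star_mul, hTsa, hDsa] at this
    calc (D * D) * T = (D * (D * T)) := by rw [mul_assoc]
      _ = T * (T * T) := by rw [← this]; noncomm_ring
      _ = T * T * T := by rw [← mul_assoc]
  have hddDD : (d * d) * (D * D) = 1 := by
    calc (d * d) * (D * D) = d * ((d * D) * D) := by noncomm_ring
      _ = 1 := by rw [hd1, one_mul, hd1]
  have hDDdd : (D * D) * (d * d) = 1 := by
    calc (D * D) * (d * d) = D * ((D * d) * d) := by noncomm_ring
      _ = 1 := by rw [hd2, one_mul, hd2]
  have hcomm : ∀ x : H →L[ℂ] H, x * (D * D) = (D * D) * x → x * (d * d) = (d * d) * x := by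
    intro x hx
    calc x * (d * d) = ((d * d) * (D * D)) * (x * (d * d)) := by rw [hddDD, one_mul]
      _ = (d * d) * (((D * D) * x) * (d * d)) := by noncomm_ring
      _ = (d * d) * ((x * (D * D)) * (d * d)) := by rw [hx]
      _ = (d * d) * (x * ((D * D) * (d * d))) := by noncomm_ring
      _ = (d * d) * x := by rw [hDDdd, mul_one]
  have hTdd : T * (d * d) = (d * d) * T := hcomm T (by rw [hTDD, hDDT])
  have hDDQe : (D * D) * Q = Q * (star Q * Q) := by
    rw [mul_assoc, hDQ, ← mul_assoc, hDS, mul_assoc]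
  have hQDDe : Q * (D * D) = Q * (star Q * Q) := by
    rw [← mul_assoc, hQD, mul_assoc, hSD]
  have hQdd : Q * (d * d) = (d * d) * Q := hcomm Q (by rw [hQDDe, hDDQe])
  have hT3dd : (T * T * T) * (d * d) = T := by
    rw [← hTDD, mul_assoc, hDDdd, mul_one]
  have hddT3 : (d * d) * (T * T * T) = T := by
    rw [← hDDT, ← mul_assoc, hddDD, one_mul]
  have hT3nn : (0 : H →L[ℂ] H) ≤ T * T * T := by
    have := star_left_conjugate_nonneg hTnn T
    rwa [hTsa] at this
  have hTddnn : (0 : H →L[ℂ] H) ≤ T * (d * d) := by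
    have h := star_left_conjugate_nonneg hT3nn (d * d)
    rw [star_mul, hdsa, hddT3] at h
    exact h
  have hT2dd : (T * T) * (d * d) = (d * d) * (T * T) := by
    calc (T * T) * (d * d) = T * (T * (d * d)) := by rw [mul_assoc]
      _ = T * ((d * d) * T) := by rw [hTdd]
      _ = (T * (d * d)) * T := by rw [← mul_assoc]
      _ = ((d * d) * T) * T := by rw [hTdd]
      _ = (d * d) * (T * T) := by rw [mul_assoc]
  have hSQd : star Q = d * (T * T) := by
    rw [hT2, ← hDS, ← mul_assoc, hd1, one_mul]
  have hQd : Q * d = T * T * (d * d) := by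
    rw [hT2, ← hQD, mul_assoc Q D, ← mul_assoc D d d, hd2, one_mul]
  have hdP : d * (Q * d) = star Q * (d * d) := by
    rw [hQd, ← mul_assoc d (T * T) (d * d), ← hSQd]
  have hds : d * star Q = (d * d) * (T * T) := by
    rw [hSQd, ← mul_assoc]
  have hu2 : (T * (d * d)) ^ 2 = ((d * d) * (T * T)) * (d * d) := by
    rw [pow_two]
    nth_rewrite 1 [hTdd]
    noncomm_ring
  have key : (Q * d) * (star Q * d) * (Q * d) = (T * (d * d)) ^ 2 := by
    calc (Q * d) * (star Q * d) * (Q * d)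
        = ((Q * d) * star Q) * (d * (Q * d)) := by noncomm_ring
      _ = ((Q * d) * star Q) * (star Q * (d * d)) := by rw [hdP]
      _ = (Q * (d * star Q)) * (star Q * (d * d)) := by rw [mul_assoc Q d (star Q)]
      _ = (Q * ((d * d) * (T * T))) * (star Q * (d * d)) := by rw [hds]
      _ = ((Q * (d * d)) * (T * T)) * (star Q * (d * d)) := by
            rw [← mul_assoc Q (d * d) (T * T)]
      _ = (((d * d) * Q) * (T * T)) * (star Q * (d * d)) := by rw [hQdd]
      _ = ((d * d) * ((Q * T) * T)) * (star Q * (d * d)) := by noncomm_ring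
      _ = ((d * d) * (T * T)) * (star Q * (d * d)) := by rw [hQT]
      _ = (d * d) * (T * (T * star Q)) * (d * d) := by noncomm_ring
      _ = (d * d) * (T * T) * (d * d) := by rw [hTS]
      _ = (T * (d * d)) ^ 2 := hu2.symm
  have hPr : QPP.rangeProj Q = Q * d := by
    unfold QPP.rangeProj
    rw [← hDdef, ← hddef]
  have hPr' : QPP.rangeProj (star Q) = star Q * d := by
    unfold QPP.rangeProj
    rw [star_star, add_comm (star Q) Q, ← hDdef, ← hddef]
  have goal2 : QPP.absStarPinv Q = T * (d * d) := by
    unfold QPP.absStarPinv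
    rw [hPr, hPr', key]
    exact CFC.sqrt_sq _ hTddnn
  have hT1u : IsUnit (T + 1) :=
    CStarAlgebra.isUnit_of_le 1 (le_add_of_nonneg_left hTnn) (IsStrictlyPositive.iff_of_unital.mpr ⟨zero_le_one, isUnit_one⟩)
  set r : H →L[ℂ] H := Ring.inverse (T + 1) with hrdef
  have hr1 : (T + 1) * r = 1 := Ring.mul_inverse_cancel _ hT1u
  have hm : QPP.matchedProj Q
      = (2 : ℂ)⁻¹ • ((T + star Q) * (T * (d * d)) * r * (T + Q)) := by
    unfold QPP.matchedProj
    rw [habs, goal2, ← hrdef]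
  have hQ2 : Q * (T + star Q) = T * (T + 1) := by
    rw [mul_add, hQT, ← hT2, mul_add, mul_one, add_comm]
  have huT : (T * (d * d)) * T = T * (T * (d * d)) := by
    calc (T * (d * d)) * T = T * ((d * d) * T) := by rw [mul_assoc]
      _ = T * (T * (d * d)) := by rw [hTdd]
  have hu1 : (T * (d * d)) * (T + 1) = (T + 1) * (T * (d * d)) := by
    rw [mul_add, add_mul, mul_one, one_mul, huT]
  have hs1 : (T * (T * (d * d))) * T = T := by
    calc (T * (T * (d * d))) * T = ((T * T) * (d * d)) * T := by
          rw [← mul_assoc T T (d * d)]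
      _ = (T * T) * ((d * d) * T) := by rw [mul_assoc]
      _ = (T * T) * (T * (d * d)) := by rw [hTdd]
      _ = ((T * T) * T) * (d * d) := by rw [← mul_assoc]
      _ = T := hT3dd
  have hs2 : (T * (T * (d * d))) * Q = Q := by
    calc (T * (T * (d * d))) * Q = ((T * T) * (d * d)) * Q := by
          rw [← mul_assoc T T (d * d)]
      _ = (T * T) * ((d * d) * Q) := by rw [mul_assoc]
      _ = (T * T) * (Q * (d * d)) := by rw [hQdd]
      _ = ((T * T) * Q) * (d * d) := by rw [← mul_assoc]
      _ = ((Q * star Q) * Q) * (d * d) := by rw [hT2]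
      _ = ((D * D) * Q) * (d * d) := by rw [mul_assoc Q (star Q) Q, ← hDDQe]
      _ = (D * D) * (Q * (d * d)) := by rw [mul_assoc]
      _ = (D * D) * ((d * d) * Q) := by rw [hQdd]
      _ = ((D * D) * (d * d)) * Q := by rw [← mul_assoc]
      _ = Q := by rw [hDDdd, one_mul]
  have hQX : Q * ((T + star Q) * (T * (d * d)) * r * (T + Q)) = T + Q := by
    calc Q * ((T + star Q) * (T * (d * d)) * r * (T + Q))
        = (Q * (T + star Q)) * (T * (d * d)) * r * (T + Q) := by noncomm_ring
      _ = (T * (T + 1)) * (T * (d * d)) * r * (T + Q) := by rw [hQ2]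
      _ = T * ((T + 1) * (T * (d * d))) * r * (T + Q) := by rw [mul_assoc T (T + 1) _]
      _ = T * ((T * (d * d)) * (T + 1)) * r * (T + Q) := by rw [hu1]
      _ = (T * (T * (d * d))) * ((T + 1) * r) * (T + Q) := by noncomm_ring
      _ = (T * (T * (d * d))) * (T + Q) := by rw [hr1, mul_one]
      _ = (T * (T * (d * d))) * T + (T * (T * (d * d))) * Q := by rw [mul_add]
      _ = T + Q := by rw [hs1, hs2]
  constructor
  · rw [habs, hm]
    have h2m : (2 : H →L[ℂ] H) * ((2 : ℂ)⁻¹ • ((T + star Q) * (T * (d * d)) * r * (T + Q)))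
        = (T + star Q) * (T * (d * d)) * r * (T + Q) := by
      rw [mul_smul_comm, two_mul, ← two_smul ℂ, smul_smul,
        show ((2 : ℂ)⁻¹ * 2) = 1 by norm_num, one_smul]
    rw [mul_sub, mul_one, h2m, hQX, add_sub_cancel_right]
  · rw [goal2, habs, pow_two]

end
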